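/- Let n ∈ ℕ, m ≥ 2, and fix a standard orthonormal basis {B_x} of the m^n-dimensional Hermitian matrices given by tensor products of a standard orthonormal basis of H_m. Let 1 > r ≥ c > 0 and for Hermitian Q = ∑_x Q̂(x)B_x define R = ∑_x r^{w₁(x)} c^{w₂(x)} Q̂(x) B_x, where w₁(x) counts coordinates with x_i ∈ {1,2} and w₂(x) counts coordinates with x_i ≥ 3. If Q̂(0ⁿ)² = O(ε), |tr(Q²)/mⁿ − 1| = O(ε), and |tr(R²)/mⁿ − r²| = O(ε), then the normalized Frobenius distance between R and rQ is O(√ε). -/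

import Mathlib

open Matrix

noncomputable def frobNorm {m k : Type*} [Fintype m] [Fintype k] (M : Matrix m k ℂ) : ℝ :=
  Real.sqrt (∑ i, ∑ j, Complex.normSq (M i j))

/-- Tensor-product element `B_x = ⊗ᵢ B_{xᵢ}` of an `n`-fold basis built from a basis `B`
of `m × m` Hermitian matrices. -/
noncomputable def tensorBasis {n m : ℕ} (B : Fin (m * m) → Matrix (Fin m) (Fin m) ℂ)
    (x : Fin n → Fin (m * m)) : Matrix (Fin n → Fin m) (Fin n → Fin m) ℂ :=
  fun y z => ∏ i, B (x i) (y i) (z i)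

/-- Number of coordinates of `x` equal to 1 or 2. -/
def w1 {n m : ℕ} (x : Fin n → Fin (m * m)) : ℕ :=
  (Finset.univ.filter fun i => (x i : ℕ) = 1 ∨ (x i : ℕ) = 2).card

/-- Number of coordinates of `x` that are at least 3. -/
def w2 {n m : ℕ} (x : Fin n → Fin (m * m)) : ℕ :=
  (Finset.univ.filter fun i => 3 ≤ (x i : ℕ)).card

/-- observable scaling. For a standard orthonormal basis `{B_i}` of `H_m`
(`B₀ = I`, orthonormal for `⟨P,Q⟩ = tr(PᴴQ)/m`), `Q = ∑ Q̂(x) B_x` and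
`R = ∑ r^{w₁(x)} c^{w₂(x)} Q̂(x) B_x` with `1 > r ≥ c > 0`: if `Q̂(0ⁿ)² = O(ε)`,
`|tr(Q²)/mⁿ − 1| = O(ε)` and `|tr(R²)/mⁿ − r²| = O(ε)`, then the normalized Frobenius
distance between `R` and `rQ` is `O(√ε)`. -/
-- orthogonality of tensor basis
lemma tb_orth {n m : ℕ} (hm : 0 < m) (B : Fin (m * m) → Matrix (Fin m) (Fin m) ℂ)
    (hBo : ∀ i j, ((B i)ᴴ * B j).trace / m = if i = j then 1 else 0)
    (x y : Fin n → Fin (m * m)) :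
    ((tensorBasis B x)ᴴ * tensorBasis B y).trace = if x = y then ((m : ℂ)) ^ n else 0 := by
  have hm0 : (m : ℂ) ≠ 0 := Nat.cast_ne_zero.mpr hm.ne'
  have hBo' : ∀ i j, ((B i)ᴴ * B j).trace = if i = j then (m : ℂ) else 0 := by
    intro i j
    have h := hBo i j
    rw [div_eq_iff hm0] at h
    rw [h]
    split <;> simp
  have key : ((tensorBasis B x)ᴴ * tensorBasis B y).trace
      = ∏ i, ((B (x i))ᴴ * B (y i)).trace := by
    rw [Matrix.trace]
    simp only [Matrix.diag, Matrix.mul_apply, Matrix.conjTranspose_apply, tensorBasis]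
    have h1 : ∀ (j k : Fin n → Fin m),
        star (∏ i, B (x i) (k i) (j i)) * ∏ i, B (y i) (k i) (j i)
        = ∏ i, (star (B (x i) (k i) (j i)) * B (y i) (k i) (j i)) := by
      intro j k
      rw [star_prod, ← Finset.prod_mul_distrib]
    simp only [h1]
    -- double sum over functions = sum over functions into product
    rw [Finset.sum_comm]
    have h2 : ∀ i, ((B (x i))ᴴ * B (y i)).trace
        = ∑ p : Fin m × Fin m, star (B (x i) p.1 p.2) * B (y i) p.1 p.2 := by
      intro i
      rw [Matrix.trace]
      simp only [Matrix.diag, Matrix.mul_apply, Matrix.conjTranspose_apply]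
      rw [Fintype.sum_prod_type]
      rw [Finset.sum_comm]
    simp only [h2]
    rw [Fintype.prod_sum]
    rw [← Equiv.sum_comp (Equiv.arrowProdEquivProdArrow (Fin n) (fun _ => Fin m) (fun _ => Fin m)).symm,
      Fintype.sum_prod_type]
    rfl
  rw [key]
  simp only [hBo']
  by_cases h : x = y
  · subst h; simp
  · rw [if_neg h]
    obtain ⟨i, hi⟩ := Function.ne_iff.mp h
    exact Finset.prod_eq_zero (Finset.mem_univ i) (if_neg hi)

lemma tb_herm {n m : ℕ} (B : Fin (m * m) → Matrix (Fin m) (Fin m) ℂ)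
    (hB : ∀ i, (B i).IsHermitian) (x : Fin n → Fin (m * m)) :
    (tensorBasis B x).IsHermitian := by
  ext y z
  simp only [Matrix.conjTranspose_apply, tensorBasis, star_prod]
  exact Finset.prod_congr rfl fun i _ => congrFun (congrFun (hB (x i)) (y i)) (z i)

-- Parseval
lemma parseval {n m : ℕ} (hm : 0 < m) (B : Fin (m * m) → Matrix (Fin m) (Fin m) ℂ)
    (hBo : ∀ i j, ((B i)ᴴ * B j).trace / m = if i = j then 1 else 0)
    (d : (Fin n → Fin (m * m)) → ℝ) :
    ((∑ x, ((d x : ℂ)) • tensorBasis B x)ᴴ * (∑ x, ((d x : ℂ)) • tensorBasis B x)).trace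
      = ((m : ℂ)) ^ n * ∑ x, (d x : ℂ) ^ 2 := by
  rw [Matrix.conjTranspose_sum]
  simp only [Matrix.conjTranspose_smul, Finset.sum_mul, Finset.mul_sum, Matrix.smul_mul,
    Matrix.mul_smul, Matrix.trace_sum, Matrix.trace_smul, tb_orth hm B hBo]
  simp only [smul_ite, smul_zero, mul_ite, mul_zero, Finset.sum_ite_eq, Finset.sum_ite_eq', Finset.mem_univ,
    if_true, smul_eq_mul, Complex.star_def, Complex.conj_ofReal, Finset.mul_sum]
  exact Finset.sum_congr rfl fun x _ => by ring

lemma sum_herm {n m : ℕ} (B : Fin (m * m) → Matrix (Fin m) (Fin m) ℂ)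
    (hB : ∀ i, (B i).IsHermitian) (d : (Fin n → Fin (m * m)) → ℝ) :
    (∑ x, ((d x : ℂ)) • tensorBasis B x).IsHermitian := by
  unfold Matrix.IsHermitian
  rw [Matrix.conjTranspose_sum]
  refine Finset.sum_congr rfl fun x _ => ?_
  rw [Matrix.conjTranspose_smul, (tb_herm B hB x).eq]
  congr 1
  simp [Complex.star_def, Complex.conj_ofReal]

lemma trace_sq_re {n m : ℕ} (hm : 0 < m) (B : Fin (m * m) → Matrix (Fin m) (Fin m) ℂ)
    (hB : ∀ i, (B i).IsHermitian)
    (hBo : ∀ i j, ((B i)ᴴ * B j).trace / m = if i = j then 1 else 0)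
    (d : (Fin n → Fin (m * m)) → ℝ) :
    (((∑ x, ((d x : ℂ)) • tensorBasis B x) * (∑ x, ((d x : ℂ)) • tensorBasis B x)).trace).re
      = (m : ℝ) ^ n * ∑ x, d x ^ 2 := by
  have hh := (sum_herm B hB d).eq
  rw [show ((∑ x, ((d x : ℂ)) • tensorBasis B x) * (∑ x, ((d x : ℂ)) • tensorBasis B x))
      = (∑ x, ((d x : ℂ)) • tensorBasis B x)ᴴ * (∑ x, ((d x : ℂ)) • tensorBasis B x) from by
    rw [hh]]
  rw [parseval hm B hBo d]
  have : ((m : ℂ)) ^ n * ∑ x, (d x : ℂ) ^ 2 = (((m : ℝ) ^ n * ∑ x, d x ^ 2 : ℝ) : ℂ) := by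
    push_cast; ring
  rw [this, Complex.ofReal_re]

lemma frob_eq {n m : ℕ} (hm : 0 < m) (B : Fin (m * m) → Matrix (Fin m) (Fin m) ℂ)
    (hBo : ∀ i j, ((B i)ᴴ * B j).trace / m = if i = j then 1 else 0)
    (d : (Fin n → Fin (m * m)) → ℝ) :
    frobNorm (∑ x, ((d x : ℂ)) • tensorBasis B x)
      = Real.sqrt ((m : ℝ) ^ n * ∑ x, d x ^ 2) := by
  set M := ∑ x, ((d x : ℂ)) • tensorBasis B x with hM
  unfold frobNorm
  congr 1
  have key : (((∑ i, ∑ j, Complex.normSq (M i j) : ℝ)) : ℂ)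
      = (Mᴴ * M).trace := by
    rw [Matrix.trace]
    simp only [Matrix.diag, Matrix.mul_apply, Matrix.conjTranspose_apply]
    push_cast
    rw [Finset.sum_comm]
    refine Finset.sum_congr rfl fun i _ => Finset.sum_congr rfl fun j _ => ?_
    exact Complex.normSq_eq_conj_mul_self
  have h2 : (Mᴴ * M).trace = (((m : ℝ) ^ n * ∑ x, d x ^ 2 : ℝ) : ℂ) := by
    rw [parseval hm B hBo d]; push_cast; ring
  rw [h2] at key
  exact_mod_cast key

theorem stmt17 (r c : ℝ) (hc : 0 < c) (hcr : c ≤ r) (hr : r < 1) :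
    ∃ Cst : ℝ, 0 < Cst ∧
      ∀ (n m : ℕ) (hm : 2 ≤ m) (ε : ℝ) (_ : 0 ≤ ε)
        (B : Fin (m * m) → Matrix (Fin m) (Fin m) ℂ)
        (Qc : (Fin n → Fin (m * m)) → ℝ)
        (Q R : Matrix (Fin n → Fin m) (Fin n → Fin m) ℂ),
        (∀ i, (B i).IsHermitian) →
        B ⟨0, by nlinarith⟩ = 1 →
        (∀ i j, ((B i)ᴴ * B j).trace / m = if i = j then 1 else 0) →
        Q = ∑ x, (Qc x : ℂ) • tensorBasis B x →
        R = ∑ x, ((r ^ w1 x * c ^ w2 x * Qc x : ℝ) : ℂ) • tensorBasis B x →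
        (Qc fun _ => ⟨0, by nlinarith⟩) ^ 2 ≤ ε →
        |((Q * Q).trace).re / (m : ℝ) ^ n - 1| ≤ ε →
        |((R * R).trace).re / (m : ℝ) ^ n - r ^ 2| ≤ ε →
        frobNorm (R - (r : ℂ) • Q) / Real.sqrt ((m : ℝ) ^ n) ≤ Cst * Real.sqrt ε := by
  have hr0 : 0 < r := lt_of_lt_of_le hc hcr
  refine ⟨2, by norm_num, ?_⟩
  intro n m hm ε hε B Qc Q R hB hB1 hBo hQ hR ha0 ht1 ht2
  have hm0 : 0 < m := by omega
  have hmn : (0 : ℝ) < (m : ℝ) ^ n := by positivity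
  set x0 : Fin n → Fin (m * m) := (fun _ => ⟨0, by nlinarith⟩) with hx0
  set f : (Fin n → Fin (m * m)) → ℝ := fun x => r ^ w1 x * c ^ w2 x with hf
  -- basic facts about f
  have hf0 : ∀ x, 0 ≤ f x := fun x => by positivity
  have hfx0 : f x0 = 1 := by
    have h1 : w1 x0 = 0 := by
      unfold w1
      rw [Finset.card_eq_zero, Finset.filter_eq_empty_iff]
      intro i _
      simp [hx0]
    have h2 : w2 x0 = 0 := by
      unfold w2
      rw [Finset.card_eq_zero, Finset.filter_eq_empty_iff]
      intro i _
      simp [hx0]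
    simp [hf, h1, h2]
  have hfle : ∀ x, x ≠ x0 → f x ≤ r := by
    intro x hx
    obtain ⟨i, hi⟩ := Function.ne_iff.mp hx
    have hvi : (x i : ℕ) ≠ 0 := by
      intro h
      exact hi (Fin.ext (by simp [hx0, h]))
    have hw : 1 ≤ w1 x + w2 x := by
      by_cases h3 : 3 ≤ (x i : ℕ)
      · have : 0 < w2 x := Finset.card_pos.mpr ⟨i, Finset.mem_filter.mpr ⟨Finset.mem_univ i, h3⟩⟩
        omega
      · have h12 : (x i : ℕ) = 1 ∨ (x i : ℕ) = 2 := by omega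
        have : 0 < w1 x := Finset.card_pos.mpr ⟨i, Finset.mem_filter.mpr ⟨Finset.mem_univ i, h12⟩⟩
        omega
    calc f x = r ^ w1 x * c ^ w2 x := rfl
      _ ≤ r ^ w1 x * r ^ w2 x := by
          exact mul_le_mul_of_nonneg_left (pow_le_pow_left₀ hc.le hcr _) (by positivity)
      _ = r ^ (w1 x + w2 x) := (pow_add r _ _).symm
      _ ≤ r ^ 1 := pow_le_pow_of_le_one hr0.le hr.le hw
      _ = r := pow_one r
  -- Parseval identities
  have hQ2 : ((Q * Q).trace).re = (m : ℝ) ^ n * ∑ x, Qc x ^ 2 := by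
    rw [hQ]; exact trace_sq_re hm0 B hB hBo Qc
  have hR2 : ((R * R).trace).re = (m : ℝ) ^ n * ∑ x, (f x * Qc x) ^ 2 := by
    rw [hR]; exact trace_sq_re hm0 B hB hBo (fun x => r ^ w1 x * c ^ w2 x * Qc x)
  set t1 : ℝ := ∑ x, Qc x ^ 2 with hT1
  set t2 : ℝ := ∑ x, (f x * Qc x) ^ 2 with hT2
  have ht1' : |t1 - 1| ≤ ε := by
    rw [hQ2, mul_comm, mul_div_assoc, div_self hmn.ne', mul_one] at ht1
    exact ht1
  have ht2' : |t2 - r ^ 2| ≤ ε := by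
    rw [hR2, mul_comm, mul_div_assoc, div_self hmn.ne', mul_one] at ht2
    exact ht2
  have ht1u : t1 ≤ 1 + ε := by have := (abs_le.mp ht1').2; linarith
  have ht2l : r ^ 2 - ε ≤ t2 := by have := (abs_le.mp ht2').1; linarith
  have ha0' : Qc x0 ^ 2 ≤ ε := ha0
  -- the difference as a combination
  set D : (Fin n → Fin (m * m)) → ℝ := fun x => (f x - r) * Qc x with hD
  have hRQ : R - (r : ℂ) • Q = ∑ x, ((D x : ℝ) : ℂ) • tensorBasis B x := by
    rw [hQ, hR, Finset.smul_sum, ← Finset.sum_sub_distrib]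
    refine Finset.sum_congr rfl fun x _ => ?_
    rw [smul_smul, ← sub_smul]
    congr 1
    push_cast [hD, hf]
    ring
  set S : ℝ := ∑ x, D x ^ 2 with hS
  have hS0 : 0 ≤ S := Finset.sum_nonneg fun x _ => sq_nonneg _
  -- the key bound S ≤ 4ε
  have hkey : S + t2 ≤ r ^ 2 * t1 + 2 * Qc x0 ^ 2 := by
    have : S + t2 = ∑ x, (D x ^ 2 + (f x * Qc x) ^ 2) := by
      rw [hS, hT2, ← Finset.sum_add_distrib]
    rw [this]
    have hrhs : r ^ 2 * t1 + 2 * Qc x0 ^ 2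
        = ∑ x, (r ^ 2 * Qc x ^ 2 + if x = x0 then 2 * Qc x ^ 2 else 0) := by
      rw [Finset.sum_add_distrib, ← Finset.mul_sum,
        Finset.sum_ite_eq' Finset.univ x0 (fun x => 2 * Qc x ^ 2),
        if_pos (Finset.mem_univ x0)]
    rw [hrhs]
    refine Finset.sum_le_sum fun x _ => ?_
    by_cases hx : x = x0
    · rw [hx, if_pos rfl]
      simp only [hD, hfx0]
      nlinarith [sq_nonneg (Qc x0), hr0]
    · rw [if_neg hx]
      simp only [hD]
      have h1 := hfle x hx
      have h2 := hf0 x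
      nlinarith [mul_nonneg (mul_nonneg h2 (sub_nonneg.mpr h1)) (sq_nonneg (Qc x))]
  clear_value t1 t2 S
  have hS4 : S ≤ 4 * ε := by
    have hr2 : r ^ 2 ≤ 1 := by nlinarith
    have hA : r ^ 2 * t1 ≤ r ^ 2 * (1 + ε) := mul_le_mul_of_nonneg_left ht1u (sq_nonneg r)
    have hBd : r ^ 2 * ε ≤ 1 * ε := mul_le_mul_of_nonneg_right hr2 hε
    linarith
  -- conclude
  rw [hRQ, frob_eq hm0 B hBo D]
  rw [Real.sqrt_mul hmn.le]
  rw [mul_comm, mul_div_assoc, div_self (Real.sqrt_pos.mpr hmn).ne', mul_one]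
  rw [← hS]
  calc Real.sqrt S ≤ Real.sqrt (4 * ε) := Real.sqrt_le_sqrt hS4
    _ = 2 * Real.sqrt ε := by
        rw [Real.sqrt_mul (by norm_num), show (4:ℝ) = 2 ^ 2 by norm_num, Real.sqrt_sq (by norm_num)]
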